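/- With notation as above: let $h$ be in the open fundamental chamber $C$ and suppose $h' \in \Xi_h = \operatorname{conv}(W\cdot h)$ is such that $v := h - h' = \sum_i c_i \alpha_i^\vee$ with $c_i > 0$ for all $i \in I$. Then the open line segment $(h, h')$ is contained in the relative interior of $\Xi_h$ inside the affine subspace $E_h = h + \operatorname{span}_{\mathbb{R}}(\alpha_1^\vee, \ldots, \alpha_n^\vee)$. -/

import Mathlib

open scoped Pointwise

/-- The Coxeter matrix entry attached to a product `a_ij * a_ji` of entries of a
generalized Cartan matrix, via the standard table (`0` encodes `∞`). -/
def gcmCoxeterEntry (p : ℤ) : ℕ :=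
  if p = 0 then 2 else if p = 1 then 3 else if p = 2 then 4 else if p = 3 then 6 else 0

/-- The Weyl group of a symmetrizable generalized Cartan matrix, together with its action
on the real Cartan subalgebra of a free and cofree Kac–Moody root datum. -/
structure KMWeyl (n : ℕ) (V : Type*) [AddCommGroup V] [Module ℝ V]
    (W : Type*) [Group W] (M : CoxeterMatrix (Fin n)) where
  /-- the generalized Cartan matrix -/
  A : Matrix (Fin n) (Fin n) ℤ
  diag : ∀ i, A i i = 2
  offDiag : ∀ i j, i ≠ j → A i j ≤ 0
  zeroIff : ∀ i j, (A i j = 0 ↔ A j i = 0)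
  symmetrizable : ∃ D B : Matrix (Fin n) (Fin n) ℝ, D.IsDiag ∧ B.IsSymm ∧
    A.map (Int.cast : ℤ → ℝ) = D * B
  coxMat : ∀ i j, i ≠ j → M i j = gcmCoxeterEntry (A i j * A j i)
  /-- the Coxeter system structure on the Weyl group -/
  cs : CoxeterSystem M W
  /-- the linear action of the Weyl group on the Cartan subalgebra -/
  ρ : W →* (V →ₗ[ℝ] V)
  /-- the simple roots -/
  α : Fin n → (V →ₗ[ℝ] ℝ)
  /-- the simple coroots -/
  cor : Fin n → V
  pairing : ∀ i j, α j (cor i) = (A i j : ℝ)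
  refl : ∀ i v, ρ (cs.simple i) v = v - α i v • cor i
  freeRoots : LinearIndependent ℝ α
  cofree : LinearIndependent ℝ cor

namespace KMWeyl

variable {n : ℕ} {V : Type*} [AddCommGroup V] [Module ℝ V]
  {W : Type*} [Group W] {M : CoxeterMatrix (Fin n)}

/-- The orbit of a point `h` under the Weyl group. -/
def orb (K : KMWeyl n V W M) (h : V) : Set V := Set.range fun w => K.ρ w h

/-- The standard subgroup generated by the simple reflections indexed by `J`. -/
def std (K : KMWeyl n V W M) (J : Set (Fin n)) : Subgroup W :=
  Subgroup.closure (K.cs.simple '' J)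

/-- The support of `w`: the indices occurring in every reduced word for `w`. -/
def supp (K : KMWeyl n V W M) (w : W) : Set (Fin n) :=
  {i | ∀ l : List (Fin n), K.cs.wordProd l = w → l.length = K.cs.length w → i ∈ l}

end KMWeyl

set_option maxHeartbeats 1000000

/-- If `h` is in the open chamber and `h' ∈ Ξ_h` with `h - h'` a strictly positive
combination of all simple coroots, then the open segment `(h, h')` lies in the relative
interior of `Ξ_h` inside the affine subspace `E_h = h + span(coroots)`. -/
theorem stmt_4 {n : ℕ} {V : Type*} [NormedAddCommGroup V] [NormedSpace ℝ V]
    [FiniteDimensional ℝ V]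
    {W : Type*} [Group W] {M : CoxeterMatrix (Fin n)} (K : KMWeyl n V W M)
    (h : V) (hC : ∀ i, 0 < K.α i h)
    (h' : V) (hmem : h' ∈ convexHull ℝ (K.orb h))
    (c : Fin n → ℝ) (hc : ∀ i, 0 < c i) (hv : h - h' = ∑ i, c i • K.cor i)
    (x : V) (hx : x ∈ openSegment ℝ h h') :
    ∃ ε > 0, ∀ y : V, y - h ∈ Submodule.span ℝ (Set.range K.cor) →
      ‖y - x‖ < ε → y ∈ convexHull ℝ (K.orb h) := by
  classical
  obtain ⟨ta, tb, hta, htb, htab, hxdef⟩ := hx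
  have hh' : h' = h - ∑ i, c i • K.cor i := by rw [← hv]; abel
  have hxeq : x = h - ∑ i, (tb * c i) • K.cor i := by
    rw [← hxdef, hh', smul_sub, Finset.smul_sum]
    simp_rw [smul_smul]
    rw [← add_sub_assoc, ← add_smul, htab, one_smul]
  -- the coordinate map
  obtain ⟨φ, hφdef⟩ : ∃ f : (Fin n → ℝ) →ₗ[ℝ] V, f = Fintype.linearCombination ℝ K.cor :=
    ⟨_, rfl⟩
  have hφapp : ∀ g : Fin n → ℝ, φ g = ∑ i, g i • K.cor i := by
    intro g
    simp [hφdef, Fintype.linearCombination_apply]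
  have hker : LinearMap.ker φ = ⊥ := by
    rw [LinearMap.ker_eq_bot']
    intro m hm
    funext i
    exact Fintype.linearIndependent_iff.mp K.cofree m (by rw [← hφapp m]; exact hm) i
  obtain ⟨Kc, hKc0, hKc⟩ := φ.exists_antilipschitzWith hker
  have hKcR : (0:ℝ) < (Kc:ℝ) := hKc0
  obtain ⟨A, hAdef⟩ : ∃ t : ℝ, t = ∑ i, (c i)⁻¹ := ⟨_, rfl⟩
  obtain ⟨B, hBdef⟩ : ∃ t : ℝ, t = A * (∑ i, c i / K.α i h) + ∑ i, (K.α i h)⁻¹ := ⟨_, rfl⟩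
  have hA0 : 0 ≤ A := hAdef ▸ Finset.sum_nonneg fun i _ => (inv_nonneg.mpr (hc i).le)
  have hB0 : 0 ≤ B := by
    have h1 : 0 ≤ ∑ i, c i / K.α i h :=
      Finset.sum_nonneg fun i _ => div_nonneg (hc i).le (hC i).le
    have h2 : 0 ≤ ∑ i, (K.α i h)⁻¹ :=
      Finset.sum_nonneg fun i _ => inv_nonneg.mpr (hC i).le
    rw [hBdef]
    exact add_nonneg (mul_nonneg hA0 h1) h2
  obtain ⟨ε, hεdef⟩ : ∃ t : ℝ, t = min (tb / ((Kc:ℝ) * (A + 1))) (ta / ((Kc:ℝ) * (B + 1))) :=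
    ⟨_, rfl⟩
  have hε0 : 0 < ε := by
    rw [hεdef]
    exact lt_min (div_pos htb (mul_pos hKcR (by linarith)))
      (div_pos hta (mul_pos hKcR (by linarith)))
  refine ⟨ε, hε0, ?_⟩
  intro y hyspan hynorm
  -- coordinates of y - x
  have hymx : y - x ∈ Submodule.span ℝ (Set.range K.cor) := by
    have h2 : h - x ∈ Submodule.span ℝ (Set.range K.cor) := by
      rw [hxeq, sub_sub_cancel]
      exact Submodule.sum_mem _ fun i _ =>
        Submodule.smul_mem _ _ (Submodule.subset_span ⟨i, rfl⟩)
    have h1 : y - x = (y - h) + (h - x) := by abel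
    rw [h1]; exact Submodule.add_mem _ hyspan h2
  obtain ⟨e, he⟩ := (Submodule.mem_span_range_iff_exists_fun ℝ).mp hymx
  -- bound on the coordinates
  obtain ⟨S, hSdef⟩ : ∃ t : ℝ, t = (Kc:ℝ) * ε := ⟨_, rfl⟩
  have hS0 : 0 < S := by rw [hSdef]; exact mul_pos hKcR hε0
  have heS : ∀ i, |e i| < S := by
    intro i
    have h1 : |e i| ≤ ‖e‖ := by simpa using norm_le_pi_norm e i
    have h2 : ‖e‖ ≤ (Kc:ℝ) * ‖y - x‖ := by
      have h3 := hKc.le_mul_dist e 0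
      simpa [dist_zero_right, map_zero, hφapp, he] using h3
    have h4 : (Kc:ℝ) * ‖y - x‖ < S := by
      rw [hSdef]; exact mul_lt_mul_of_pos_left hynorm hKcR
    linarith
  obtain ⟨lam, hlamdef⟩ : ∃ t : ℝ, t = S * A := ⟨_, rfl⟩
  have hlam0 : 0 ≤ lam := by rw [hlamdef]; exact mul_nonneg hS0.le hA0
  obtain ⟨μ, hμdef⟩ : ∃ t : Fin n → ℝ, t = fun i => (lam * c i - e i) / K.α i h := ⟨_, rfl⟩
  have hlamc : ∀ i, S ≤ lam * c i := by
    intro i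
    have h1 : (c i)⁻¹ ≤ A := by
      rw [hAdef]
      exact Finset.single_le_sum (f := fun j => (c j)⁻¹)
        (fun j _ => inv_nonneg.mpr (hc j).le) (Finset.mem_univ i)
    have h2 : S * ((c i)⁻¹ * c i) ≤ S * (A * c i) :=
      mul_le_mul_of_nonneg_left (mul_le_mul_of_nonneg_right h1 (hc i).le) hS0.le
    rw [inv_mul_cancel₀ (hc i).ne', mul_one] at h2
    calc S ≤ S * (A * c i) := h2
    _ = lam * c i := by rw [hlamdef]; ring
  have hμ0 : ∀ i, 0 ≤ μ i := by
    intro i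
    simp only [hμdef]
    apply div_nonneg _ (hC i).le
    have h1 := heS i
    have h2 := hlamc i
    have h3 := le_abs_self (e i)
    linarith
  have hμa : ∀ i, μ i * K.α i h = lam * c i - e i := by
    intro i
    simp only [hμdef]
    exact div_mul_cancel₀ _ (hC i).ne'
  -- upper bounds on the weights
  have hStb : S ≤ tb / (A + 1) := by
    have h1 : ε ≤ tb / ((Kc:ℝ) * (A + 1)) := by rw [hεdef]; exact min_le_left _ _
    have h2 : S ≤ (Kc:ℝ) * (tb / ((Kc:ℝ) * (A + 1))) := by
      rw [hSdef]; exact mul_le_mul_of_nonneg_left h1 hKcR.le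
    have h3 : (Kc:ℝ) * (tb / ((Kc:ℝ) * (A + 1))) = tb / (A + 1) := by
      field_simp
    linarith [h2, h3.le]
  have hlamtb : lam ≤ tb := by
    have h1 : lam ≤ (tb / (A + 1)) * A := by
      rw [hlamdef]; exact mul_le_mul_of_nonneg_right hStb hA0
    have h2 : (tb / (A + 1)) * A ≤ tb := by
      rw [div_mul_eq_mul_div, div_le_iff₀ (by linarith), mul_add, mul_one]
      linarith
    linarith
  have hSta : S * B ≤ ta := by
    have h1 : ε ≤ ta / ((Kc:ℝ) * (B + 1)) := by rw [hεdef]; exact min_le_right _ _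
    have h2 : S ≤ (Kc:ℝ) * (ta / ((Kc:ℝ) * (B + 1))) := by
      rw [hSdef]; exact mul_le_mul_of_nonneg_left h1 hKcR.le
    have h3 : (Kc:ℝ) * (ta / ((Kc:ℝ) * (B + 1))) = ta / (B + 1) := by
      field_simp
    have h4 : S ≤ ta / (B + 1) := by linarith [h2, h3.le]
    have h5 : S * B ≤ (ta / (B + 1)) * B := mul_le_mul_of_nonneg_right h4 hB0
    have h6 : (ta / (B + 1)) * B ≤ ta := by
      rw [div_mul_eq_mul_div, div_le_iff₀ (by linarith), mul_add, mul_one]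
      linarith
    linarith
  have hμsum : ∑ i, μ i ≤ ta := by
    calc ∑ i, μ i ≤ ∑ i, (lam * c i + S) / K.α i h := by
          refine Finset.sum_le_sum fun i _ => ?_
          simp only [hμdef]
          refine (div_le_div_iff_of_pos_right (hC i)).mpr ?_
          have h1 := heS i
          have h2 := neg_abs_le (e i)
          linarith
      _ = S * B := by
          rw [hBdef, mul_add, ← mul_assoc, Finset.mul_sum, Finset.mul_sum,
            ← Finset.sum_add_distrib]
          refine Finset.sum_congr rfl fun i _ => ?_
          rw [hlamdef]
          field_simp
      _ ≤ ta := hSta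
  -- the convex combination
  have hhOrb : h ∈ K.orb h := ⟨1, by simp⟩
  have hpOrb : ∀ i, (h - K.α i h • K.cor i) ∈ K.orb h := fun i =>
    ⟨K.cs.simple i, by simp [K.refl]⟩
  have hmain : ∑ o : Option (Option (Fin n)),
      (Option.elim o (1 - (tb - lam) - ∑ i, μ i) (fun o' => Option.elim o' (tb - lam) μ)) •
      (Option.elim o h (fun o' => Option.elim o' h' (fun i => h - K.α i h • K.cor i)))
      ∈ convexHull ℝ (K.orb h) := by
    apply (convex_convexHull ℝ (K.orb h)).sum_mem
    · rintro (_ | _ | i) -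
      · simp only [Option.elim_none]
        linarith
      · simp only [Option.elim_some, Option.elim_none]
        linarith
      · simp only [Option.elim_some]
        exact hμ0 i
    · simp only [Fintype.sum_option, Option.elim_none, Option.elim_some]
      ring
    · rintro (_ | _ | i) -
      · simp only [Option.elim_none]
        exact subset_convexHull ℝ _ hhOrb
      · simp only [Option.elim_some, Option.elim_none]
        exact hmem
      · simp only [Option.elim_some]
        exact subset_convexHull ℝ _ (hpOrb i)
  have hfinal : ∑ o : Option (Option (Fin n)),
      (Option.elim o (1 - (tb - lam) - ∑ i, μ i) (fun o' => Option.elim o' (tb - lam) μ)) •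
      (Option.elim o h (fun o' => Option.elim o' h' (fun i => h - K.α i h • K.cor i))) = y := by
    simp only [Fintype.sum_option, Option.elim_none, Option.elim_some]
    have hy : y = x + ∑ i, e i • K.cor i := by rw [he]; abel
    rw [hy, hxeq, hh']
    simp only [smul_sub, Finset.smul_sum, smul_smul, Finset.sum_sub_distrib]
    rw [← Finset.sum_smul]
    have hsum3 : ∑ i, ((tb - lam) * c i) • K.cor i + ∑ i, (μ i * K.α i h) • K.cor i
        = ∑ i, (tb * c i) • K.cor i - ∑ i, e i • K.cor i := by
      rw [← Finset.sum_add_distrib, ← Finset.sum_sub_distrib]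
      refine Finset.sum_congr rfl fun i _ => ?_
      rw [← add_smul, ← sub_smul, hμa i]
      congr 1
      ring
    conv_rhs => rw [sub_add]
    rw [← hsum3]
    module
  exact hfinal ▸ hmain
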